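/- Fix a > 0. For r1, r2 > 0, consider the hyperbolic triangle with side lengths r1 + r2, r1 + a, r2 + a, and let θ1 = arccos[(cosh(r1 + r2)·cosh(r1 + a) − cosh(r2 + a)) / (sinh(r1 + r2)·sinh(r1 + a))] and θ2 = arccos[(cosh(r1 + r2)·cosh(r2 + a) − cosh(r1 + a)) / (sinh(r1 + r2)·sinh(r2 + a))]. Then θ1·cosh(r1) + θ2·cosh(r2) tends to π as (r1, r2) → (0, 0) with r1, r2 > 0. -/

import Mathlib

open Real Filter

set_option maxHeartbeats 1000000

/-- The inner angle at the center of the circle of radius `ri` in the triangle formed by the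
centers of three mutually externally tangent hyperbolic circles of radii `ri`, `rj`, `rk`. -/
noncomputable def innerAngle (ri rj rk : ℝ) : ℝ :=
  Real.arccos ((Real.cosh (ri + rj) * Real.cosh (ri + rk) - Real.cosh (rj + rk)) /
    (Real.sinh (ri + rj) * Real.sinh (ri + rk)))

/-- The cosine of the inner angle, as an explicit function. -/
noncomputable def Afun (a x y : ℝ) : ℝ :=
  (Real.cosh (x + y) * Real.cosh (x + a) - Real.cosh (y + a)) /
    (Real.sinh (x + y) * Real.sinh (x + a))

lemma key_identity (a x y : ℝ) :
    (Real.cosh (x + y) * Real.cosh (x + a) - Real.cosh (y + a)) * Real.sinh (y + a) +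
      (Real.cosh (x + y) * Real.cosh (y + a) - Real.cosh (x + a)) * Real.sinh (x + a) =
    2 * Real.sinh x * Real.sinh y * Real.sinh (x + y + 2 * a) := by
  have hc : ∀ t : ℝ, Real.cosh t = (Real.exp t + (Real.exp t)⁻¹) / 2 := fun t => by
    rw [Real.cosh_eq, Real.exp_neg]
  have hs : ∀ t : ℝ, Real.sinh t = (Real.exp t - (Real.exp t)⁻¹) / 2 := fun t => by
    rw [Real.sinh_eq, Real.exp_neg]
  simp only [hc, hs, two_mul, Real.exp_add]
  have hx := Real.exp_ne_zero x
  have hy := Real.exp_ne_zero y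
  have ha := Real.exp_ne_zero a
  field_simp
  ring

lemma Afun_mem {a x y : ℝ} (hx : 0 < x) (hy : 0 < y) (ha : 0 < a) :
    -1 ≤ Afun a x y ∧ Afun a x y ≤ 1 := by
  have hD : 0 < Real.sinh (x + y) * Real.sinh (x + a) :=
    mul_pos (Real.sinh_pos_iff.2 (by linarith)) (Real.sinh_pos_iff.2 (by linarith))
  have hsub : Real.cosh (x + y) * Real.cosh (x + a) - Real.sinh (x + y) * Real.sinh (x + a)
      = Real.cosh (y - a) := by
    rw [← Real.cosh_sub]; ring_nf
  have hadd : Real.cosh (x + y) * Real.cosh (x + a) + Real.sinh (x + y) * Real.sinh (x + a)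
      = Real.cosh (2 * x + y + a) := by
    rw [← Real.cosh_add]; ring_nf
  have h1 : Real.cosh (y - a) ≤ Real.cosh (y + a) := by
    rw [Real.cosh_le_cosh]
    rw [abs_of_pos (by linarith : 0 < y + a), abs_le]
    constructor <;> linarith
  have h2 : Real.cosh (y + a) ≤ Real.cosh (2 * x + y + a) := by
    rw [Real.cosh_le_cosh]
    rw [abs_of_pos (by linarith : 0 < y + a), abs_of_pos (by linarith : 0 < 2 * x + y + a)]
    linarith
  constructor
  · rw [Afun, le_div_iff₀ hD]
    nlinarith
  · rw [Afun, div_le_one hD]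
    nlinarith

lemma Afun_sum {a x y : ℝ} (hx : 0 < x) (hy : 0 < y) (ha : 0 < a) :
    Afun a x y + Afun a y x =
      2 * Real.sinh x * Real.sinh y * Real.sinh (x + y + 2 * a) /
        (Real.sinh (x + y) * Real.sinh (x + a) * Real.sinh (y + a)) := by
  have h1 : Real.sinh (x + y) ≠ 0 := (Real.sinh_pos_iff.2 (by linarith)).ne'
  have h2 : Real.sinh (x + a) ≠ 0 := (Real.sinh_pos_iff.2 (by linarith)).ne'
  have h3 : Real.sinh (y + a) ≠ 0 := (Real.sinh_pos_iff.2 (by linarith)).ne'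
  have key := key_identity a x y
  rw [Afun, Afun, add_comm y x]
  rw [div_add_div _ _ (mul_ne_zero h1 h2) (mul_ne_zero h1 h3),
    div_eq_div_iff (mul_ne_zero (mul_ne_zero h1 h2) (mul_ne_zero h1 h3))
      (mul_ne_zero (mul_ne_zero h1 h2) h3)]
  linear_combination key * (Real.sinh (x + y) * Real.sinh (x + y) * Real.sinh (x + a) *
    Real.sinh (y + a))

/-- The quantitative bound: `arccos A + arccos B` is within `π * √((A+B)/2)` of `π`. -/
lemma arccos_add_arccos_near_pi {A B : ℝ} (hA1 : -1 ≤ A) (hA2 : A ≤ 1) (hB1 : -1 ≤ B)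
    (hB2 : B ≤ 1) (hAB : 0 ≤ A + B) :
    |Real.arccos A + Real.arccos B - π| ≤ π * Real.sqrt ((A + B) / 2) := by
  set θ := Real.arccos A + Real.arccos B with hθdef
  have hθ0 : 0 ≤ θ := add_nonneg (Real.arccos_nonneg _) (Real.arccos_nonneg _)
  have hθ2 : θ ≤ 2 * π := by
    have := Real.arccos_le_pi A; have := Real.arccos_le_pi B; linarith
  have hcos : Real.cos θ = A * B - Real.sqrt (1 - A ^ 2) * Real.sqrt (1 - B ^ 2) := by
    rw [hθdef, Real.cos_add, Real.cos_arccos hA1 hA2, Real.cos_arccos hB1 hB2,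
      Real.sin_arccos, Real.sin_arccos]
  have hA2' : 0 ≤ 1 - A ^ 2 := by nlinarith
  have hB2' : 0 ≤ 1 - B ^ 2 := by nlinarith
  have hsq : Real.sqrt (1 - A ^ 2) * Real.sqrt (1 - B ^ 2)
      = Real.sqrt ((1 - A ^ 2) * (1 - B ^ 2)) := (Real.sqrt_mul hA2' _).symm
  have hge : 1 + A * B - (A + B) ≤ Real.sqrt ((1 - A ^ 2) * (1 - B ^ 2)) := by
    rcases le_or_gt (1 + A * B - (A + B)) 0 with h | h
    · exact h.trans (Real.sqrt_nonneg _)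
    · rw [Real.le_sqrt h.le (mul_nonneg hA2' hB2')]
      nlinarith [mul_nonneg hAB (mul_nonneg (by linarith : (0:ℝ) ≤ 1 - A)
        (by linarith : (0:ℝ) ≤ 1 - B))]
  have h1c : 1 + Real.cos θ ≤ A + B := by
    rw [hcos, hsq]; linarith
  set t := π / 2 - θ / 2 with htdef
  have hθt : θ = π - 2 * t := by rw [htdef]; ring
  have ht : |t| ≤ π / 2 := by
    rw [abs_le]; constructor <;> [skip; skip] <;> rw [htdef] <;> linarith
  have hsin : 2 * Real.sin t ^ 2 = 1 + Real.cos θ := by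
    rw [hθt, Real.cos_pi_sub, Real.cos_two_mul']
    have := Real.sin_sq_add_cos_sq t
    linarith
  have hsin2 : Real.sin t ^ 2 ≤ (A + B) / 2 := by linarith
  have habs_sin : |Real.sin t| ≤ Real.sqrt ((A + B) / 2) := by
    rw [← Real.sqrt_sq_eq_abs]
    exact Real.sqrt_le_sqrt hsin2
  have hjordan : 2 / π * |t| ≤ |Real.sin t| := Real.mul_abs_le_abs_sin ht
  have hpi : (0:ℝ) < π := Real.pi_pos
  have h2 : 2 / π * |t| ≤ Real.sqrt ((A + B) / 2) := hjordan.trans habs_sin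
  have h3 : 2 * |t| ≤ π * Real.sqrt ((A + B) / 2) := by
    rw [div_mul_eq_mul_div, div_le_iff₀ hpi] at h2
    linarith
  have habs : |θ - π| = 2 * |t| := by
    rw [show θ - π = -(2 * t) by rw [hθt]; ring, abs_neg, abs_mul]
    norm_num
  rw [habs]
  exact h3

theorem stmt_11 (a : ℝ) (ha : 0 < a) :
    Tendsto
      (fun p : ℝ × ℝ =>
        innerAngle p.1 p.2 a * Real.cosh p.1 + innerAngle p.2 p.1 a * Real.cosh p.2)
      (nhdsWithin (0, 0) {p : ℝ × ℝ | 0 < p.1 ∧ 0 < p.2})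
      (nhds π) := by
  set l := nhdsWithin ((0:ℝ), (0:ℝ)) {p : ℝ × ℝ | 0 < p.1 ∧ 0 < p.2} with hl
  have hmem : ∀ᶠ p in l, 0 < p.1 ∧ 0 < p.2 := eventually_mem_nhdsWithin
  -- the sum A + B tends to 0
  have hU : Tendsto (fun p : ℝ × ℝ =>
      2 * Real.sinh p.1 * Real.sinh (p.1 + p.2 + 2 * a) /
        (Real.sinh (p.1 + a) * Real.sinh (p.2 + a))) l (nhds 0) := by
    have hcont : ContinuousAt (fun p : ℝ × ℝ =>
        2 * Real.sinh p.1 * Real.sinh (p.1 + p.2 + 2 * a) /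
          (Real.sinh (p.1 + a) * Real.sinh (p.2 + a))) (0, 0) := by
      apply ContinuousAt.div
      · fun_prop
      · fun_prop
      · simp only [Prod.fst, Prod.snd, zero_add]
        exact (mul_pos (Real.sinh_pos_iff.2 ha) (Real.sinh_pos_iff.2 ha)).ne'
    have := hcont.tendsto.mono_left
      (nhdsWithin_le_nhds (s := {p : ℝ × ℝ | 0 < p.1 ∧ 0 < p.2}))
    simpa using this
  have hAB : Tendsto (fun p : ℝ × ℝ => Afun a p.1 p.2 + Afun a p.2 p.1) l (nhds 0) := by
    apply tendsto_of_tendsto_of_tendsto_of_le_of_le' tendsto_const_nhds hU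
    · filter_upwards [hmem] with p hp
      rw [Afun_sum hp.1 hp.2 ha]
      have h1 : 0 < Real.sinh (p.1 + p.2) := Real.sinh_pos_iff.2 (by linarith [hp.1, hp.2])
      have h2 : 0 < Real.sinh (p.1 + a) := Real.sinh_pos_iff.2 (by linarith [hp.1])
      have h3 : 0 < Real.sinh (p.2 + a) := Real.sinh_pos_iff.2 (by linarith [hp.2])
      have h4 : 0 < Real.sinh p.1 := Real.sinh_pos_iff.2 hp.1
      have h5 : 0 < Real.sinh p.2 := Real.sinh_pos_iff.2 hp.2
      have h6 : 0 < Real.sinh (p.1 + p.2 + 2 * a) :=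
        Real.sinh_pos_iff.2 (by linarith [hp.1, hp.2])
      positivity
    · filter_upwards [hmem] with p hp
      rw [Afun_sum hp.1 hp.2 ha]
      have h1 : 0 < Real.sinh (p.1 + p.2) := Real.sinh_pos_iff.2 (by linarith [hp.1, hp.2])
      have h2 : 0 < Real.sinh (p.1 + a) := Real.sinh_pos_iff.2 (by linarith [hp.1])
      have h3 : 0 < Real.sinh (p.2 + a) := Real.sinh_pos_iff.2 (by linarith [hp.2])
      have h4 : 0 < Real.sinh p.1 := Real.sinh_pos_iff.2 hp.1
      have h5 : 0 < Real.sinh p.2 := Real.sinh_pos_iff.2 hp.2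
      have h6 : 0 < Real.sinh (p.1 + p.2 + 2 * a) :=
        Real.sinh_pos_iff.2 (by linarith [hp.1, hp.2])
      have hmono : Real.sinh p.2 ≤ Real.sinh (p.1 + p.2) :=
        Real.sinh_le_sinh.2 (by linarith [hp.1])
      rw [div_le_div_iff₀ (by positivity) (by positivity)]
      nlinarith [mul_pos (mul_pos h4 h6) (mul_pos h2 h3),
        mul_pos h2 h3, mul_pos (mul_pos h4 h6) h5]
  -- the sum of the two arccos tends to π
  have hsqrt : Tendsto (fun p : ℝ × ℝ =>
      Real.sqrt ((Afun a p.1 p.2 + Afun a p.2 p.1) / 2)) l (nhds 0) := by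
    have h0 := hAB.div_const 2
    rw [zero_div] at h0
    have h1 := (Real.continuous_sqrt.tendsto 0).comp h0
    rw [Real.sqrt_zero] at h1
    exact h1
  have hsum : Tendsto (fun p : ℝ × ℝ =>
      Real.arccos (Afun a p.1 p.2) + Real.arccos (Afun a p.2 p.1)) l (nhds π) := by
    have hlow : Tendsto (fun p : ℝ × ℝ =>
        π - π * Real.sqrt ((Afun a p.1 p.2 + Afun a p.2 p.1) / 2)) l (nhds π) := by
      have := (tendsto_const_nhds : Tendsto (fun _ : ℝ × ℝ => π) l (nhds π)).sub
        (hsqrt.const_mul π)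
      simpa using this
    have hhigh : Tendsto (fun p : ℝ × ℝ =>
        π + π * Real.sqrt ((Afun a p.1 p.2 + Afun a p.2 p.1) / 2)) l (nhds π) := by
      have := (tendsto_const_nhds : Tendsto (fun _ : ℝ × ℝ => π) l (nhds π)).add
        (hsqrt.const_mul π)
      simpa using this
    apply tendsto_of_tendsto_of_tendsto_of_le_of_le' hlow hhigh
    · filter_upwards [hmem] with p hp
      obtain ⟨hA1, hA2⟩ := Afun_mem hp.1 hp.2 ha
      obtain ⟨hB1, hB2⟩ := Afun_mem hp.2 hp.1 ha
      have hABpos : 0 ≤ Afun a p.1 p.2 + Afun a p.2 p.1 := by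
        rw [Afun_sum hp.1 hp.2 ha]
        have h1 : 0 < Real.sinh (p.1 + p.2) := Real.sinh_pos_iff.2 (by linarith [hp.1, hp.2])
        have h2 : 0 < Real.sinh (p.1 + a) := Real.sinh_pos_iff.2 (by linarith [hp.1])
        have h3 : 0 < Real.sinh (p.2 + a) := Real.sinh_pos_iff.2 (by linarith [hp.2])
        have h4 : 0 < Real.sinh p.1 := Real.sinh_pos_iff.2 hp.1
        have h5 : 0 < Real.sinh p.2 := Real.sinh_pos_iff.2 hp.2
        have h6 : 0 < Real.sinh (p.1 + p.2 + 2 * a) :=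
          Real.sinh_pos_iff.2 (by linarith [hp.1, hp.2])
        positivity
      have := arccos_add_arccos_near_pi hA1 hA2 hB1 hB2 hABpos
      rw [abs_le] at this
      linarith [this.1]
    · filter_upwards [hmem] with p hp
      obtain ⟨hA1, hA2⟩ := Afun_mem hp.1 hp.2 ha
      obtain ⟨hB1, hB2⟩ := Afun_mem hp.2 hp.1 ha
      have hABpos : 0 ≤ Afun a p.1 p.2 + Afun a p.2 p.1 := by
        rw [Afun_sum hp.1 hp.2 ha]
        have h1 : 0 < Real.sinh (p.1 + p.2) := Real.sinh_pos_iff.2 (by linarith [hp.1, hp.2])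
        have h2 : 0 < Real.sinh (p.1 + a) := Real.sinh_pos_iff.2 (by linarith [hp.1])
        have h3 : 0 < Real.sinh (p.2 + a) := Real.sinh_pos_iff.2 (by linarith [hp.2])
        have h4 : 0 < Real.sinh p.1 := Real.sinh_pos_iff.2 hp.1
        have h5 : 0 < Real.sinh p.2 := Real.sinh_pos_iff.2 hp.2
        have h6 : 0 < Real.sinh (p.1 + p.2 + 2 * a) :=
          Real.sinh_pos_iff.2 (by linarith [hp.1, hp.2])
        positivity
      have := arccos_add_arccos_near_pi hA1 hA2 hB1 hB2 hABpos
      rw [abs_le] at this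
      linarith [this.2]
  -- the correction terms tend to 0
  have hcorr : Tendsto (fun p : ℝ × ℝ =>
      π * (Real.cosh p.1 - 1) + π * (Real.cosh p.2 - 1)) l (nhds 0) := by
    have hcont : ContinuousAt (fun p : ℝ × ℝ =>
        π * (Real.cosh p.1 - 1) + π * (Real.cosh p.2 - 1)) (0, 0) := by fun_prop
    have := hcont.tendsto.mono_left
      (nhdsWithin_le_nhds (s := {p : ℝ × ℝ | 0 < p.1 ∧ 0 < p.2}))
    simpa using this
  -- final squeeze
  have hfinal : Tendsto (fun p : ℝ × ℝ =>
      Real.arccos (Afun a p.1 p.2) * Real.cosh p.1 +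
        Real.arccos (Afun a p.2 p.1) * Real.cosh p.2) l (nhds π) := by
    have hhigh : Tendsto (fun p : ℝ × ℝ =>
        (Real.arccos (Afun a p.1 p.2) + Real.arccos (Afun a p.2 p.1)) +
          (π * (Real.cosh p.1 - 1) + π * (Real.cosh p.2 - 1))) l (nhds π) := by
      have := hsum.add hcorr
      simpa using this
    apply tendsto_of_tendsto_of_tendsto_of_le_of_le' hsum hhigh
    · filter_upwards with p
      have h1 := Real.one_le_cosh p.1
      have h2 := Real.one_le_cosh p.2
      have h3 := Real.arccos_nonneg (Afun a p.1 p.2)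
      have h4 := Real.arccos_nonneg (Afun a p.2 p.1)
      nlinarith
    · filter_upwards with p
      have h1 := Real.one_le_cosh p.1
      have h2 := Real.one_le_cosh p.2
      have h3 := Real.arccos_nonneg (Afun a p.1 p.2)
      have h4 := Real.arccos_nonneg (Afun a p.2 p.1)
      have h5 := Real.arccos_le_pi (Afun a p.1 p.2)
      have h6 := Real.arccos_le_pi (Afun a p.2 p.1)
      nlinarith
  exact hfinal
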